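/- Let p : ℤ≥0 → [0,∞) be bounded and satisfy the discrete PE condition Σ_{i=k-l}^{k} p(i) ≥ δ for all k ∈ ℤ≥0 (some l ∈ ℤ≥0, δ > 0). Let V ∈ UPPD (α₁(|x|) ≤ V(x,k) ≤ α₂(|x|), α₁,α₂ ∈ K∞) satisfy V(F(x,k),k+1) - V(x,k) ≤ -p(k+1)Θ(V(x,k)) for all x, k, where Θ is positive definite. Then there exist κ, γ ∈ K∞ such that the function U(x,k) = κ(V(x,k)) + (γ(V(x,k))/(4(l+1)))·Σ_{s=k-l}^{k} Σ_{j=s}^{k} p(j) satisfies, for some positive definite α₃, U(F(x,k),k+1) - U(x,k) ≤ -α₃(|x|) for all x ∈ ℝⁿ and k ∈ ℤ≥0, and there exist ᾱ₁, ᾱ₂ ∈ K∞ with ᾱ₁(|x|) ≤ U(x,k) ≤ ᾱ₂(|x|) everywhere. -/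

import Mathlib

/-- A function of class K∞ (viewed on `[0,∞)`): continuous, strictly increasing,
unbounded, and vanishing at `0`. -/
def IsKInf (f : ℝ → ℝ) : Prop :=
  ContinuousOn f (Set.Ici 0) ∧ StrictMonoOn f (Set.Ici 0) ∧ f 0 = 0 ∧
    ∀ M : ℝ, ∃ x, 0 ≤ x ∧ M ≤ f x

/-- A positive definite function on `[0,∞)`: continuous, vanishing at `0`,
positive elsewhere. -/
def IsPD (f : ℝ → ℝ) : Prop :=
  ContinuousOn f (Set.Ici 0) ∧ f 0 = 0 ∧ ∀ s > (0 : ℝ), 0 < f s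

/-- Theorem 1: strictification of a nonstrict discrete-time
Lyapunov function with PE decay. There exist `κ, γ ∈ K∞` such that
`U(x,k) = κ(V(x,k)) + (γ(V(x,k))/(4(l+1)))·Σ_{s=k-l}^{k} Σ_{j=s}^{k} p(j)` is a
strict Lyapunov function: `ΔU ≤ -α₃(|x|)` for some positive definite `α₃`, and
`U` is sandwiched between two K∞ functions of `|x|`. -/

lemma IsKInf.nonneg' {f : ℝ → ℝ} (hf : IsKInf f) {x : ℝ} (hx : 0 ≤ x) : 0 ≤ f x := by
  rw [← hf.2.2.1]
  exact (hf.2.1.monotoneOn) (Set.mem_Ici.2 le_rfl) (Set.mem_Ici.2 hx) hx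

lemma IsKInf.mono' {f : ℝ → ℝ} (hf : IsKInf f) {x y : ℝ} (hx : 0 ≤ x) (hxy : x ≤ y) :
    f x ≤ f y :=
  (hf.2.1.monotoneOn) (Set.mem_Ici.2 hx) (Set.mem_Ici.2 (hx.trans hxy)) hxy

lemma IsKInf.comp' {f g : ℝ → ℝ} (hf : IsKInf f) (hg : IsKInf g) :
    IsKInf (fun r => f (g r)) := by
  have hmaps : ∀ r ∈ Set.Ici (0:ℝ), g r ∈ Set.Ici (0:ℝ) := fun r hr => hg.nonneg' hr
  refine ⟨hf.1.comp hg.1 hmaps, ?_, by show f (g 0) = 0; rw [hg.2.2.1, hf.2.2.1], ?_⟩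
  · intro a ha b hb hab
    exact hf.2.1 (hmaps a ha) (hmaps b hb) (hg.2.1 ha hb hab)
  · intro M
    obtain ⟨y, hy0, hy⟩ := hf.2.2.2 M
    obtain ⟨x, hx0, hx⟩ := hg.2.2.2 y
    exact ⟨x, hx0, hy.trans (hf.mono' hy0 hx)⟩


noncomputable def mInf (θ : ℝ → ℝ) (b v : ℝ) : ℝ := sInf (θ '' Set.Icc v b)

lemma mInf_le (θ : ℝ → ℝ) (hθ : Continuous θ) {b v t : ℝ} (ht : t ∈ Set.Icc v b) :
    mInf θ b v ≤ θ t :=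
  csInf_le ((isCompact_Icc.image hθ).bddBelow) ⟨t, ht, rfl⟩

lemma mInf_exists_min (θ : ℝ → ℝ) (hθ : Continuous θ) {b v : ℝ} (h : v ≤ b) :
    ∃ t₀ ∈ Set.Icc v b, mInf θ b v = θ t₀ ∧ ∀ t ∈ Set.Icc v b, θ t₀ ≤ θ t := by
  obtain ⟨t₀, ht₀, hmin⟩ := isCompact_Icc.exists_isMinOn (Set.nonempty_Icc.2 h)
    (hθ.continuousOn)
  refine ⟨t₀, ht₀, le_antisymm (mInf_le θ hθ ht₀) ?_, hmin⟩
  exact le_csInf (Set.Nonempty.image _ (Set.nonempty_Icc.2 h)) (by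
    rintro _ ⟨t, ht, rfl⟩; exact hmin ht)

lemma mInf_mono (θ : ℝ → ℝ) (hθ : Continuous θ) {b v v' : ℝ} (hv : v ≤ v') (hb : v' ≤ b) :
    mInf θ b v ≤ mInf θ b v' := by
  apply le_csInf (Set.Nonempty.image _ (Set.nonempty_Icc.2 hb))
  rintro _ ⟨t, ht, rfl⟩
  exact mInf_le θ hθ ⟨hv.trans ht.1, ht.2⟩

lemma mInf_continuousOn (θ : ℝ → ℝ) (hθ : Continuous θ) (b : ℝ) :
    ContinuousOn (mInf θ b) (Set.Iic b) := by
  intro v₀ hv₀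
  rw [Metric.continuousWithinAt_iff]
  intro ε hε
  obtain ⟨δ, hδ, hcont⟩ := Metric.continuousAt_iff.1 (hθ.continuousAt (x := v₀)) (ε / 2)
    (by linarith)
  refine ⟨δ, hδ, fun v hv hdist => ?_⟩
  have hv₀b : v₀ ≤ b := hv₀
  have hvb : v ≤ b := hv
  rw [Real.dist_eq] at hdist ⊢
  rw [abs_sub_lt_iff] at hdist
  rcases le_total v v₀ with hle | hle
  · have hmono : mInf θ b v ≤ mInf θ b v₀ := mInf_mono θ hθ hle hv₀b
    obtain ⟨t₀, ht₀, heq, hmin⟩ := mInf_exists_min θ hθ hvb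
    rcases le_total v₀ t₀ with h1 | h1
    · have h2 : mInf θ b v₀ ≤ θ t₀ := mInf_le θ hθ ⟨h1, ht₀.2⟩
      have h3 : mInf θ b v₀ = mInf θ b v := le_antisymm (heq ▸ h2) hmono
      simpa [h3] using hε
    · have hd : dist t₀ v₀ < δ := by
        rw [Real.dist_eq, abs_sub_lt_iff]; exact ⟨by linarith, by have := ht₀.1; linarith [hdist.2]⟩
      have h2 : θ v₀ - ε / 2 < θ t₀ := by
        have := hcont hd; rw [Real.dist_eq, abs_sub_lt_iff] at this; linarith [this.2]
      have h3 : mInf θ b v₀ ≤ θ v₀ := mInf_le θ hθ ⟨le_refl _, hv₀b⟩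
      rw [abs_sub_lt_iff]; exact ⟨by linarith, by rw [heq]; linarith⟩
  · have hmono : mInf θ b v₀ ≤ mInf θ b v := mInf_mono θ hθ hle hvb
    obtain ⟨t₀, ht₀, heq, hmin⟩ := mInf_exists_min θ hθ hv₀b
    rcases le_total v t₀ with h1 | h1
    · have h2 : mInf θ b v ≤ θ t₀ := mInf_le θ hθ ⟨h1, ht₀.2⟩
      have h3 : mInf θ b v = mInf θ b v₀ := le_antisymm (heq ▸ h2) hmono
      simpa [h3] using hε
    · have hd : dist t₀ v₀ < δ := by
        rw [Real.dist_eq, abs_sub_lt_iff]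
        exact ⟨by have := ht₀.1; linarith [hdist.1], by have := ht₀.1; linarith⟩
      have h2 : θ v₀ - ε / 2 < θ t₀ := by
        have := hcont hd; rw [Real.dist_eq, abs_sub_lt_iff] at this; linarith [this.2]
      have hdv : dist v v₀ < δ := by rw [Real.dist_eq, abs_sub_lt_iff]; exact hdist
      have h4 : θ v < θ v₀ + ε / 2 := by
        have := hcont hdv; rw [Real.dist_eq, abs_sub_lt_iff] at this; linarith [this.1]
      have h5 : mInf θ b v ≤ θ v := mInf_le θ hθ ⟨le_refl _, hvb⟩
      rw [abs_sub_lt_iff]; exact ⟨by rw [heq]; linarith, by linarith⟩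

section KGK
variable (θ : ℝ → ℝ)

/-- extension of θ to all of ℝ -/
noncomputable def eθ (t : ℝ) : ℝ := θ (max t 0)

noncomputable def kLo (s : ℝ) : ℝ := mInf (eθ θ) 1 (min s 1)

noncomputable def kHi (s : ℝ) : ℝ := mInf (fun t => eθ θ (-t)) (-1) (min (-s) (-1))

noncomputable def kC (s : ℝ) : ℝ := (1 + max s 0) * (1 + 1 / kHi θ s)

noncomputable def kGamma (s : ℝ) : ℝ := s * kLo θ s / (1 + θ 1)

noncomputable def kKappa (s : ℝ) : ℝ := s * kC θ s

variable (hθ : IsPD θ)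
include hθ

lemma eθ_cont : Continuous (eθ θ) :=
  hθ.1.comp_continuous (continuous_id.max continuous_const) fun x => Set.mem_Ici.2 (le_max_right _ _)

lemma θ_nonneg {s : ℝ} (hs : 0 ≤ s) : 0 ≤ θ s := by
  rcases eq_or_lt_of_le hs with h | h
  · rw [← h, hθ.2.1]
  · exact (hθ.2.2 s h).le

lemma eθ_nonneg (t : ℝ) : 0 ≤ eθ θ t := θ_nonneg θ hθ (le_max_right _ _)

lemma eθ_eq {t : ℝ} (ht : 0 ≤ t) : eθ θ t = θ t := by rw [eθ, max_eq_left ht]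

lemma kLo_nonneg (s : ℝ) : 0 ≤ kLo θ s :=
  le_csInf (Set.Nonempty.image _ (Set.nonempty_Icc.2 (min_le_right s 1)))
    (by rintro _ ⟨t, _, rfl⟩; exact eθ_nonneg θ hθ t)

lemma kLo_mono : Monotone (kLo θ) := fun a b hab =>
  mInf_mono _ (eθ_cont θ hθ) (min_le_min_right 1 hab) (min_le_right b 1)

lemma kLo_pos {s : ℝ} (hs : 0 < s) : 0 < kLo θ s := by
  obtain ⟨t₀, ht₀, heq, -⟩ := mInf_exists_min _ (eθ_cont θ hθ) (min_le_right s 1)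
  rw [kLo, heq, eθ, max_eq_left]
  · exact hθ.2.2 t₀ (lt_of_lt_of_le (lt_min hs one_pos) ht₀.1)
  · exact le_trans (le_min hs.le zero_le_one) ht₀.1

lemma kLo_le {s : ℝ} (h0 : 0 ≤ s) (h1 : s ≤ 1) : kLo θ s ≤ θ s := by
  have := mInf_le (eθ θ) (eθ_cont θ hθ) (b := 1) (v := min s 1) (t := s)
    ⟨min_le_left s 1, h1⟩
  rwa [eθ_eq θ hθ h0] at this

lemma kLo_of_ge_one {s : ℝ} (h : 1 ≤ s) : kLo θ s = θ 1 := by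
  rw [kLo, min_eq_right h, mInf, Set.Icc_self, Set.image_singleton, csInf_singleton,
    eθ_eq θ hθ zero_le_one]

lemma kHi_pos (s : ℝ) : 0 < kHi θ s := by
  obtain ⟨t₀, ht₀, heq, -⟩ := mInf_exists_min (fun t => eθ θ (-t))
    ((eθ_cont θ hθ).comp continuous_neg) (b := -1) (v := min (-s) (-1)) (min_le_right _ _)
  rw [kHi, heq, eθ, max_eq_left (by nlinarith [ht₀.2] : (0:ℝ) ≤ -t₀)]
  exact hθ.2.2 _ (by nlinarith [ht₀.2])

lemma kHi_anti : Antitone (kHi θ) := fun a b hab =>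
  mInf_mono _ ((eθ_cont θ hθ).comp continuous_neg)
    (min_le_min_right (-1) (neg_le_neg hab)) (min_le_right _ _)

lemma kHi_le {s : ℝ} (h : 1 ≤ s) : kHi θ s ≤ θ s := by
  have := mInf_le (fun t => eθ θ (-t)) ((eθ_cont θ hθ).comp continuous_neg)
    (b := -1) (v := min (-s) (-1)) (t := -s) ⟨min_le_left _ _, by linarith⟩
  simpa [kHi, eθ_eq θ hθ (by linarith : (0:ℝ) ≤ s)] using this

lemma kLo_cont : Continuous (kLo θ) := by
  have h := mInf_continuousOn (eθ θ) (eθ_cont θ hθ) 1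
  exact h.comp_continuous (continuous_id.min continuous_const) fun x => min_le_right x 1

lemma kHi_cont : Continuous (kHi θ) := by
  have h := mInf_continuousOn (fun t => eθ θ (-t)) ((eθ_cont θ hθ).comp continuous_neg) (-1)
  exact h.comp_continuous (continuous_neg.min continuous_const) fun x => Set.mem_Iic.2 (min_le_right _ _)

lemma kC_cont : Continuous (kC θ) := by
  apply Continuous.mul
  · exact continuous_const.add (continuous_id.max continuous_const)
  · exact continuous_const.add (continuous_const.div (kHi_cont θ hθ)
      fun x => (kHi_pos θ hθ x).ne')

lemma kC_one_le {s : ℝ} : 1 ≤ kC θ s := by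
  rw [kC]
  have h1 : (1:ℝ) ≤ 1 + max s 0 := by simp [le_max_right]
  have h2 : (1:ℝ) ≤ 1 + 1 / kHi θ s := by
    have h := (kHi_pos θ hθ s)
    have : 0 ≤ 1 / kHi θ s := by positivity
    linarith
  nlinarith

lemma kC_mono {a b : ℝ} (ha : 0 ≤ a) (hab : a ≤ b) : kC θ a ≤ kC θ b := by
  have h1 : 1 + max a 0 ≤ 1 + max b 0 := by
    have := max_le_max_right (0:ℝ) hab; linarith
  have h2 : 1 + 1 / kHi θ a ≤ 1 + 1 / kHi θ b := by
    have := one_div_le_one_div_of_le (kHi_pos θ hθ b) (kHi_anti θ hθ hab); linarith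
  have p1 : (0:ℝ) ≤ 1 + max a 0 := by positivity
  have p2 : (0:ℝ) < 1 + 1 / kHi θ a := by have := kHi_pos θ hθ a; positivity
  rw [kC, kC]
  exact mul_le_mul h1 h2 p2.le (by positivity)

lemma θ1_pos : 0 < θ 1 := hθ.2.2 1 one_pos

lemma kGamma_key {s : ℝ} (hs : 0 ≤ s) : kGamma θ s ≤ θ s * kC θ s := by
  rcases eq_or_lt_of_le hs with h | h
  · simp [← h, kGamma, hθ.2.1]
  rcases le_total s 1 with h1 | h1
  · -- γ s = s·lo s/(1+θ1) ≤ lo s ≤ θ s ≤ θ s · c s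
    have g1 : kGamma θ s ≤ kLo θ s := by
      rw [kGamma, div_le_iff₀ (by have := θ1_pos θ hθ; linarith)]
      have := kLo_nonneg θ hθ s
      have := θ1_pos θ hθ
      nlinarith
    have g2 : kLo θ s ≤ θ s := kLo_le θ hθ hs h1
    have g3 : θ s ≤ θ s * kC θ s := by
      have := θ_nonneg θ hθ hs; have := kC_one_le θ hθ (s := s); nlinarith
    linarith
  · -- s ≥ 1: γ s = s θ1/(1+θ1) ≤ s ≤ 1 + s ≤ θ s (1+s)/hi s ≤ θ s c s
    have hlo := kLo_of_ge_one θ hθ h1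
    have ht1 := θ1_pos θ hθ
    have g1 : kGamma θ s ≤ s := by
      rw [kGamma, hlo, div_le_iff₀ (by linarith)]
      nlinarith
    have hhp := kHi_pos θ hθ s
    have hhle := kHi_le θ hθ h1
    have hθs : 0 < θ s := hθ.2.2 s h
    have key : 1 + s ≤ θ s * kC θ s := by
      rw [kC]
      have e1 : (1:ℝ) ≤ θ s / kHi θ s := (one_le_div hhp).2 hhle
      have e2 : max s 0 = s := max_eq_left hs
      rw [e2]
      have : θ s * ((1 + s) * (1 + 1 / kHi θ s)) ≥ (1+s) * (θ s / kHi θ s) := by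
        rw [ge_iff_le, div_eq_mul_inv, one_div]
        nlinarith [mul_pos hθs (inv_pos.2 hhp), inv_pos.2 hhp]
      nlinarith [mul_le_mul_of_nonneg_left e1 (by linarith : (0:ℝ) ≤ 1 + s)]
    linarith
  
lemma kKappa_KInf : IsKInf (kKappa θ) := by
  refine ⟨(continuous_id.mul (kC_cont θ hθ)).continuousOn, ?_, by simp [kKappa], ?_⟩
  · intro a ha b hb hab
    simp only [kKappa]
    have h1 : a * kC θ a ≤ a * kC θ b := by
      have := kC_mono θ hθ ha hab.le
      exact mul_le_mul_of_nonneg_left this ha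
    have h2 : a * kC θ b < b * kC θ b := by
      have hc : 0 < kC θ b := lt_of_lt_of_le one_pos (kC_one_le θ hθ)
      exact mul_lt_mul_of_pos_right hab hc
    linarith
  · intro M
    refine ⟨max M 0, le_max_right _ _, ?_⟩
    have h1 : max M 0 ≤ max M 0 * kC θ (max M 0) := by
      have := kC_one_le θ hθ (s := max M 0)
      nlinarith [le_max_right M 0]
    exact le_trans (le_max_left M 0) h1

lemma kGamma_KInf : IsKInf (kGamma θ) := by
  have ht1 := θ1_pos θ hθ
  refine ⟨((continuous_id.mul (kLo_cont θ hθ)).div_const _).continuousOn, ?_,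
    by simp [kGamma], ?_⟩
  · intro a ha b hb hab
    simp only [kGamma]
    apply div_lt_div_of_pos_right ?_ (by linarith)
    have h1 : a * kLo θ a ≤ a * kLo θ b :=
      mul_le_mul_of_nonneg_left (kLo_mono θ hθ hab.le) ha
    have h2 : a * kLo θ b < b * kLo θ b :=
      mul_lt_mul_of_pos_right hab (kLo_pos θ hθ (lt_of_le_of_lt ha hab))
    linarith
  · intro M
    set x := max 1 (M * (1 + θ 1) / θ 1) with hx
    refine ⟨x, le_trans zero_le_one (le_max_left _ _), ?_⟩
    rw [kGamma, kLo_of_ge_one θ hθ (le_max_left _ _)]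
    rw [le_div_iff₀ (by linarith)]
    have h2 : M * (1 + θ 1) / θ 1 ≤ x := le_max_right _ _
    rw [div_le_iff₀ ht1] at h2
    nlinarith

end KGK


lemma sum_shiftX (p : ℤ → ℝ) (K : ℤ) (l : ℕ) :
    ∑ s ∈ Finset.Icc (K + 1 - l) (K + 1), ∑ j ∈ Finset.Icc s (K + 1), p j
      = (∑ s ∈ Finset.Icc (K - l) K, ∑ j ∈ Finset.Icc s K, p j)
        - (∑ j ∈ Finset.Icc (K - l) K, p j) + ((l : ℝ) + 1) * p (K + 1) := by
  have e1 : ∑ s ∈ Finset.Icc (K + 1 - l) (K + 1), ∑ j ∈ Finset.Icc s (K + 1), p j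
      = ∑ s ∈ Finset.Icc (K + 1 - l) (K + 1), (p (K + 1) + ∑ j ∈ Finset.Icc s K, p j) := by
    apply Finset.sum_congr rfl
    intro s hs
    have hs' := Finset.mem_Icc.1 hs
    have : Finset.Icc s (K + 1) = insert (K + 1) (Finset.Icc s K) := by
      ext j; simp only [Finset.mem_Icc, Finset.mem_insert]; omega
    rw [this, Finset.sum_insert (by simp only [Finset.mem_Icc]; omega)]
  rw [e1, Finset.sum_add_distrib, Finset.sum_const]
  have hcard : (Finset.Icc (K + 1 - l) (K + 1)).card = l + 1 := by
    rw [Int.card_Icc]; omega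
  rw [hcard]
  have e2 : Finset.Icc (K + 1 - (l:ℤ)) (K + 1) = insert (K + 1) (Finset.Icc (K + 1 - l) K) := by
    ext j; simp only [Finset.mem_Icc, Finset.mem_insert]; omega
  rw [e2, Finset.sum_insert (by simp only [Finset.mem_Icc]; omega)]
  have e3 : Finset.Icc (K + 1) K = (∅ : Finset ℤ) := Finset.Icc_eq_empty (by omega)
  rw [e3]
  have e4 : Finset.Icc (K - (l:ℤ)) K = insert (K - l) (Finset.Icc (K + 1 - l) K) := by
    ext j; simp only [Finset.mem_Icc, Finset.mem_insert]; omega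
  have e5 : ∑ s ∈ Finset.Icc (K - (l:ℤ)) K, ∑ j ∈ Finset.Icc s K, p j
      = (∑ j ∈ Finset.Icc (K - l) K, p j) + ∑ s ∈ Finset.Icc (K + 1 - l) K, ∑ j ∈ Finset.Icc s K, p j := by
    conv_lhs => rw [e4]
    rw [Finset.sum_insert (by simp only [Finset.mem_Icc]; omega)]
  rw [e5]
  push_cast
  ring


theorem stmt9 (n : ℕ)
    (F : EuclideanSpace ℝ (Fin n) → ℕ → EuclideanSpace ℝ (Fin n))
    (V : EuclideanSpace ℝ (Fin n) → ℕ → ℝ)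
    (α₁ α₂ : ℝ → ℝ) (hα₁ : IsKInf α₁) (hα₂ : IsKInf α₂)
    (hsand : ∀ x k, α₁ ‖x‖ ≤ V x k ∧ V x k ≤ α₂ ‖x‖)
    (p : ℤ → ℝ) (pbar : ℝ) (hpnn : ∀ i, 0 ≤ p i) (hpbd : ∀ i, p i ≤ pbar)
    (hpneg : ∀ i < 0, p i = 0)
    (l : ℕ) (δ : ℝ) (hδ : 0 < δ)
    (hPE : ∀ k : ℕ, δ ≤ ∑ i ∈ Finset.Icc ((k : ℤ) - l) (k : ℤ), p i)
    (Θ : ℝ → ℝ) (hΘ : IsPD Θ)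
    (hdecay : ∀ x k, V (F x k) (k + 1) - V x k ≤ -p ((k : ℤ) + 1) * Θ (V x k)) :
    ∃ κ γ : ℝ → ℝ, IsKInf κ ∧ IsKInf γ ∧
      ∃ U : EuclideanSpace ℝ (Fin n) → ℕ → ℝ,
        (∀ x k, U x k = κ (V x k) + γ (V x k) / (4 * ((l : ℝ) + 1)) *
            ∑ s ∈ Finset.Icc ((k : ℤ) - l) (k : ℤ),
              ∑ j ∈ Finset.Icc s (k : ℤ), p j) ∧
        (∃ α₃ : ℝ → ℝ, IsPD α₃ ∧
          ∀ x k, U (F x k) (k + 1) - U x k ≤ -α₃ ‖x‖) ∧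
        (∃ β₁ β₂ : ℝ → ℝ, IsKInf β₁ ∧ IsKInf β₂ ∧
          ∀ x k, β₁ ‖x‖ ≤ U x k ∧ U x k ≤ β₂ ‖x‖) := by
  classical
  set γ := kGamma Θ with hγdef
  set κ := kKappa Θ with hκdef
  have hκK : IsKInf κ := kKappa_KInf Θ hΘ
  have hγK : IsKInf γ := kGamma_KInf Θ hΘ
  refine ⟨κ, γ, hκK, hγK, ?_⟩
  have hL : (0:ℝ) < (l:ℝ) + 1 := by positivity
  have pbar0 : 0 ≤ pbar := le_trans (hpnn 0) (hpbd 0)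
  have hV0 : ∀ x k, 0 ≤ V x k := fun x k =>
    le_trans (hα₁.nonneg' (norm_nonneg x)) (hsand x k).1
  have hΘnn : ∀ s : ℝ, 0 ≤ s → 0 ≤ Θ s := fun s hs => θ_nonneg Θ hΘ hs
  refine ⟨fun x k => κ (V x k) + γ (V x k) / (4 * ((l:ℝ) + 1)) *
      ∑ s ∈ Finset.Icc ((k : ℤ) - l) (k : ℤ), ∑ j ∈ Finset.Icc s (k : ℤ), p j,
    fun x k => rfl, ?_, ?_⟩
  · -- decrease
    refine ⟨fun r => δ / (4 * ((l:ℝ) + 1)) * γ (α₁ r), ?_, ?_⟩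
    · refine ⟨ContinuousOn.mul continuousOn_const
        (hγK.1.comp hα₁.1 fun r hr => Set.mem_Ici.2 (hα₁.nonneg' hr)), ?_, ?_⟩
      · show δ / (4 * ((l:ℝ) + 1)) * γ (α₁ 0) = 0
        rw [hα₁.2.2.1, hγK.2.2.1, mul_zero]
      · intro s hs
        have h1 : 0 < α₁ s := by
          rw [← hα₁.2.2.1]
          exact hα₁.2.1 (Set.mem_Ici.2 le_rfl) (Set.mem_Ici.2 hs.le) hs
        have h2 : 0 < γ (α₁ s) := by
          rw [← hγK.2.2.1]
          exact hγK.2.1 (Set.mem_Ici.2 le_rfl) (Set.mem_Ici.2 h1.le) h1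
        positivity
    · intro x k
      set a := V x k with hadef
      set b := V (F x k) (k + 1) with hbdef
      set q := p ((k:ℤ) + 1) with hqdef
      have ha0 : 0 ≤ a := hV0 x k
      have hb0 : 0 ≤ b := hV0 (F x k) (k + 1)
      have hq0 : 0 ≤ q := hpnn _
      have hΘa : 0 ≤ Θ a := hΘnn a ha0
      have hdec : b - a ≤ -q * Θ a := hdecay x k
      have hba : b ≤ a := by nlinarith
      have hγa0 : 0 ≤ γ a := hγK.nonneg' ha0
      have hγba : γ b ≤ γ a := hγK.mono' hb0 hba
      -- step 1 : κ b - κ a + q * γ a / 4 ≤ 0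
      have step1 : κ b - κ a + q * γ a / 4 ≤ 0 := by
        have hc1 : b * kC Θ b ≤ b * kC Θ a :=
          mul_le_mul_of_nonneg_left (kC_mono Θ hΘ hb0 hba) hb0
        have hcnn : 0 ≤ kC Θ a := le_trans zero_le_one (kC_one_le Θ hΘ)
        have h2 : (q * Θ a) * kC Θ a ≤ (a - b) * kC Θ a :=
          mul_le_mul_of_nonneg_right (by linarith) hcnn
        have h3 : γ a ≤ Θ a * kC Θ a := kGamma_key Θ hΘ ha0
        have h4 : q * γ a ≤ q * (Θ a * kC Θ a) := mul_le_mul_of_nonneg_left h3 hq0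
        have h5 : κ a - κ b ≥ (a - b) * kC Θ a := by
          rw [hκdef]; simp only [kKappa]; nlinarith
        have h6 : 0 ≤ q * γ a := mul_nonneg hq0 hγa0
        nlinarith
      -- sums
      set Sk := ∑ s ∈ Finset.Icc ((k : ℤ) - l) (k : ℤ), ∑ j ∈ Finset.Icc s (k : ℤ), p j
        with hSk
      set Sk1 := ∑ s ∈ Finset.Icc (((k+1 : ℕ) : ℤ) - l) ((k+1 : ℕ) : ℤ),
          ∑ j ∈ Finset.Icc s ((k+1 : ℕ) : ℤ), p j with hSk1
      set A := ∑ j ∈ Finset.Icc ((k : ℤ) - l) (k : ℤ), p j with hA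
      have hcast : ((k + 1 : ℕ) : ℤ) = (k : ℤ) + 1 := by push_cast; ring
      have hΔS : Sk1 = Sk - A + ((l:ℝ) + 1) * q := by
        rw [hSk1, hcast]
        have : (k:ℤ) + 1 - l = (k:ℤ) + 1 - l := rfl
        have := sum_shiftX p (k:ℤ) l
        convert this using 3 <;> push_cast <;> ring
      have hSknn : 0 ≤ Sk := Finset.sum_nonneg fun s _ =>
        Finset.sum_nonneg fun j _ => hpnn j
      have hSk1nn : 0 ≤ Sk1 := Finset.sum_nonneg fun s _ =>
        Finset.sum_nonneg fun j _ => hpnn j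
      have hAδ : δ ≤ A := hPE k
      -- step 2
      have step2 : γ b * Sk1 - γ a * Sk ≤ γ a * (((l:ℝ) + 1) * q - δ) := by
        have h1 : (γ b - γ a) * Sk1 ≤ 0 := mul_nonpos_of_nonpos_of_nonneg (by linarith) hSk1nn
        have h2 : γ a * (Sk1 - Sk) ≤ γ a * (((l:ℝ) + 1) * q - δ) := by
          apply mul_le_mul_of_nonneg_left _ hγa0
          rw [hΔS]; linarith
        nlinarith
      have hγα : γ (α₁ ‖x‖) ≤ γ a :=
        hγK.mono' (hα₁.nonneg' (norm_nonneg x)) (hsand x k).1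
      have hγαnn : 0 ≤ γ (α₁ ‖x‖) := hγK.nonneg' (hα₁.nonneg' (norm_nonneg x))
      have key : γ a * (((l:ℝ) + 1) * q - δ) / (4 * ((l:ℝ) + 1))
          = q * γ a / 4 - γ a * δ / (4 * ((l:ℝ) + 1)) := by
        field_simp
      have final : κ b + γ b / (4 * ((l:ℝ)+1)) * Sk1 - (κ a + γ a / (4 * ((l:ℝ)+1)) * Sk)
          ≤ -(δ / (4 * ((l:ℝ)+1)) * γ (α₁ ‖x‖)) := by
        have e1 : κ b + γ b / (4 * ((l:ℝ)+1)) * Sk1 - (κ a + γ a / (4 * ((l:ℝ)+1)) * Sk)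
            = (κ b - κ a) + (γ b * Sk1 - γ a * Sk) / (4 * ((l:ℝ)+1)) := by
          field_simp
          ring
        rw [e1]
        have e2 : (γ b * Sk1 - γ a * Sk) / (4 * ((l:ℝ)+1))
            ≤ γ a * (((l:ℝ) + 1) * q - δ) / (4 * ((l:ℝ)+1)) :=
          div_le_div_of_nonneg_right step2 (by positivity) |>.trans_eq rfl
        have e3 : γ a * δ / (4 * ((l:ℝ)+1)) ≥ γ (α₁ ‖x‖) * δ / (4 * ((l:ℝ)+1)) := by
          apply div_le_div_of_nonneg_right _ (by positivity)
          exact mul_le_mul_of_nonneg_right hγα hδ.le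
        have e4 : γ (α₁ ‖x‖) * δ / (4 * ((l:ℝ)+1)) = δ / (4 * ((l:ℝ)+1)) * γ (α₁ ‖x‖) := by
          ring
        rw [key] at e2
        linarith
      exact final
  · -- sandwich
    refine ⟨fun r => κ (α₁ r), fun r => κ (α₂ r) + ((l:ℝ)+1) * pbar / 4 * γ (α₂ r),
      hκK.comp' hα₁, ?_, ?_⟩
    · have hC : 0 ≤ ((l:ℝ)+1) * pbar / 4 := by positivity
      have hcomp : IsKInf (fun r => κ (α₂ r)) := hκK.comp' hα₂
      have hcompγ : IsKInf (fun r => γ (α₂ r)) := hγK.comp' hα₂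
      refine ⟨hcomp.1.add (ContinuousOn.mul continuousOn_const hcompγ.1), ?_, ?_, ?_⟩
      · intro x hx y hy hxy
        have h1 : κ (α₂ x) < κ (α₂ y) := hcomp.2.1 hx hy hxy
        have h2 : γ (α₂ x) ≤ γ (α₂ y) := hcompγ.mono' hx hxy.le
        nlinarith
      · simp only [hcomp.2.2.1, hcompγ.2.2.1, mul_zero, add_zero]
      · intro M
        obtain ⟨x, hx0, hx⟩ := hcomp.2.2.2 M
        refine ⟨x, hx0, le_trans hx ?_⟩
        have := hcompγ.nonneg' hx0
        nlinarith
    · intro x k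
      have hVle := (hsand x k).2
      have hV0' := hV0 x k
      have hα₂nn : 0 ≤ α₂ ‖x‖ := le_trans hV0' hVle
      set Sk := ∑ s ∈ Finset.Icc ((k : ℤ) - l) (k : ℤ), ∑ j ∈ Finset.Icc s (k : ℤ), p j
        with hSk
      have hSknn : 0 ≤ Sk := Finset.sum_nonneg fun s _ =>
        Finset.sum_nonneg fun j _ => hpnn j
      have hSkub : Sk ≤ ((l:ℝ)+1) * (((l:ℝ)+1) * pbar) := by
        rw [hSk]
        calc ∑ s ∈ Finset.Icc ((k : ℤ) - l) (k : ℤ), ∑ j ∈ Finset.Icc s (k : ℤ), p j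
            ≤ ∑ s ∈ Finset.Icc ((k : ℤ) - l) (k : ℤ), (((l:ℝ)+1) * pbar) := by
              apply Finset.sum_le_sum
              intro s hs
              have hs' := Finset.mem_Icc.1 hs
              calc ∑ j ∈ Finset.Icc s (k : ℤ), p j
                  ≤ (Finset.Icc s (k : ℤ)).card • pbar :=
                    Finset.sum_le_card_nsmul _ _ pbar fun j _ => hpbd j
                _ = ((Finset.Icc s (k : ℤ)).card : ℝ) * pbar := by
                    rw [nsmul_eq_mul]
                _ ≤ ((l:ℝ)+1) * pbar := by
                    apply mul_le_mul_of_nonneg_right _ pbar0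
                    have : (Finset.Icc s (k : ℤ)).card = ((k:ℤ) + 1 - s).toNat := Int.card_Icc s (k:ℤ)
                    rw [this]
                    have h1 : ((k:ℤ) + 1 - s).toNat ≤ l + 1 := by omega
                    calc (((k:ℤ) + 1 - s).toNat : ℝ) ≤ ((l + 1 : ℕ) : ℝ) := by
                          exact_mod_cast h1
                      _ = (l:ℝ) + 1 := by push_cast; ring
          _ = ((Finset.Icc ((k : ℤ) - l) (k : ℤ)).card : ℝ) * (((l:ℝ)+1) * pbar) := by
              rw [Finset.sum_const, nsmul_eq_mul]
          _ ≤ ((l:ℝ)+1) * (((l:ℝ)+1) * pbar) := by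
              apply mul_le_mul_of_nonneg_right _ (by positivity)
              have : (Finset.Icc ((k:ℤ) - l) (k : ℤ)).card = ((k:ℤ) + 1 - ((k:ℤ) - l)).toNat :=
                Int.card_Icc _ _
              rw [this]
              have h1 : ((k:ℤ) + 1 - ((k:ℤ) - l)).toNat = l + 1 := by omega
              rw [h1]
              exact le_of_eq (by push_cast; ring)
      constructor
      · have h1 : κ (α₁ ‖x‖) ≤ κ (V x k) :=
          hκK.mono' (hα₁.nonneg' (norm_nonneg x)) (hsand x k).1
        have h2 : 0 ≤ γ (V x k) / (4 * ((l:ℝ)+1)) * Sk := by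
          have h0 := hγK.nonneg' hV0'
          exact mul_nonneg (div_nonneg h0 (by positivity)) hSknn
        linarith
      · have h1 : κ (V x k) ≤ κ (α₂ ‖x‖) := hκK.mono' hV0' hVle
        have h2 : γ (V x k) / (4 * ((l:ℝ)+1)) * Sk
            ≤ γ (α₂ ‖x‖) / (4 * ((l:ℝ)+1)) * (((l:ℝ)+1) * (((l:ℝ)+1) * pbar)) := by
          have hγle : γ (V x k) ≤ γ (α₂ ‖x‖) := hγK.mono' hV0' hVle
          have hγnn : 0 ≤ γ (V x k) := hγK.nonneg' hV0'
          have hγnn2 : 0 ≤ γ (α₂ ‖x‖) := hγnn.trans hγle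
          have d1 : γ (V x k) / (4 * ((l:ℝ)+1)) ≤ γ (α₂ ‖x‖) / (4 * ((l:ℝ)+1)) :=
            div_le_div_of_nonneg_right hγle (by positivity) |>.trans_eq rfl
          exact mul_le_mul d1 hSkub hSknn (div_nonneg hγnn2 (by positivity))
        have h3 : γ (α₂ ‖x‖) / (4 * ((l:ℝ)+1)) * (((l:ℝ)+1) * (((l:ℝ)+1) * pbar))
            = ((l:ℝ)+1) * pbar / 4 * γ (α₂ ‖x‖) := by
          field_simp
        rw [h3] at h2
        linarith
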